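/- For a nonnegative V ∈ L¹_loc(ℝⁿ), the following are equivalent: (i) for every λ > 0, the Lebesgue measure of {x ∈ B(a,1) : V(x) < λ} tends to 0 as |a| → ∞; (ii) ∫_{B(a,1)} dx/(1 + V(x)) → 0 as |a| → ∞. -/

import Mathlib

open MeasureTheory Filter Metric

/-- For nonnegative `V ∈ L¹_loc(ℝⁿ)`: (i) for every `λ > 0`,
`|{x ∈ B(a,1) : V(x) < λ}| → 0` as `|a| → ∞`, iff (ii) `∫_{B(a,1)} dx/(1+V(x)) → 0`. -/
theorem stmt3 (n : ℕ) (V : EuclideanSpace ℝ (Fin n) → ℝ) (hmeas : Measurable V)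
    (hV : ∀ x, 0 ≤ V x) (hloc : LocallyIntegrable V volume) :
    (∀ lam : ℝ, 0 < lam →
        Tendsto (fun a => volume {x ∈ closedBall a 1 | V x < lam})
          (Bornology.cobounded (EuclideanSpace ℝ (Fin n))) (nhds 0)) ↔
      Tendsto (fun a => ∫ x in closedBall a 1, 1 / (1 + V x))
        (Bornology.cobounded (EuclideanSpace ℝ (Fin n))) (nhds (0 : ℝ)) := by
  have hpos : ∀ x, (0:ℝ) < 1 + V x := fun x => by linarith [hV x]
  have hfmeas : Measurable (fun x => 1 / (1 + V x)) :=
    measurable_const.div (measurable_const.add hmeas)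
  have hint : ∀ a : EuclideanSpace ℝ (Fin n),
      IntegrableOn (fun x => 1 / (1 + V x)) (closedBall a 1) volume := by
    intro a
    apply Integrable.mono' (g := fun _ => (1:ℝ))
      (integrableOn_const measure_closedBall_lt_top.ne)
      hfmeas.aestronglyMeasurable
    filter_upwards with x
    rw [Real.norm_eq_abs, abs_of_nonneg (le_of_lt (div_pos one_pos (hpos x)))]
    rw [div_le_one (hpos x)]
    linarith [hV x]
  have hInonneg : ∀ a, 0 ≤ ∫ x in closedBall a 1, 1 / (1 + V x) := fun a =>
    setIntegral_nonneg measurableSet_closedBall (fun x _ => le_of_lt (div_pos one_pos (hpos x)))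
  constructor
  · intro h
    rw [Metric.tendsto_nhds]
    intro ε hε
    set C := (volume (closedBall (0 : EuclideanSpace ℝ (Fin n)) 1)).toReal with hCdef
    have hC : 0 ≤ C := ENNReal.toReal_nonneg
    set lam := 2 * C / ε + 1 with hlamdef
    have hlam : 0 < lam := by positivity
    have hsplit : ∀ a, ∫ x in closedBall a 1, 1 / (1 + V x) ≤
        (volume {x ∈ closedBall a 1 | V x < lam}).toReal + C / (1 + lam) := by
      intro a
      have hsmeas : MeasurableSet {y | V y < lam} := measurableSet_lt hmeas measurable_const
      have hind : IntegrableOn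
          (fun x => Set.indicator {y | V y < lam} (fun _ => (1:ℝ)) x + 1 / (1 + lam))
          (closedBall a 1) volume := by
        exact ((integrableOn_const measure_closedBall_lt_top.ne).indicator hsmeas).add
          (integrableOn_const measure_closedBall_lt_top.ne)
      have hle : ∀ x, 1 / (1 + V x) ≤
          Set.indicator {y | V y < lam} (fun _ => (1:ℝ)) x + 1 / (1 + lam) := by
        intro x
        by_cases hx : V x < lam
        · have hx' : x ∈ {y | V y < lam} := hx
          rw [Set.indicator_of_mem hx']
          have : 1 / (1 + V x) ≤ 1 := by rw [div_le_one (hpos x)]; linarith [hV x]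
          have h2 : (0:ℝ) ≤ 1 / (1 + lam) := by positivity
          linarith
        · have hx' : x ∉ {y | V y < lam} := hx
          rw [Set.indicator_of_notMem hx']
          have : 1 + lam ≤ 1 + V x := by push_neg at hx; linarith
          calc 1 / (1 + V x) ≤ 1 / (1 + lam) :=
                one_div_le_one_div_of_le (by linarith) this
            _ = 0 + 1 / (1 + lam) := by ring
      calc ∫ x in closedBall a 1, 1 / (1 + V x)
          ≤ ∫ x in closedBall a 1,
              (Set.indicator {y | V y < lam} (fun _ => (1:ℝ)) x + 1 / (1 + lam)) :=
            setIntegral_mono (hint a) hind hle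
        _ = (∫ x in closedBall a 1, Set.indicator {y | V y < lam} (fun _ => (1:ℝ)) x)
              + (volume (closedBall a 1)).toReal • (1 / (1 + lam)) := by
            rw [integral_add ((integrableOn_const (s := closedBall a 1) (μ := volume) (C := (1:ℝ)) measure_closedBall_lt_top.ne).indicator
              hsmeas) (integrableOn_const (s := closedBall a 1) (μ := volume) (C := 1 / (1 + lam)) measure_closedBall_lt_top.ne),
              setIntegral_const, measureReal_def]
        _ = (volume (closedBall a 1 ∩ {y | V y < lam})).toReal • (1:ℝ)
              + C • (1 / (1 + lam)) := by
            rw [setIntegral_indicator hsmeas, setIntegral_const, measureReal_def,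
              Measure.addHaar_closedBall_center volume a 1]
        _ = (volume {x ∈ closedBall a 1 | V x < lam}).toReal + C / (1 + lam) := by
            have : closedBall a 1 ∩ {y | V y < lam} = {x ∈ closedBall a 1 | V x < lam} := rfl
            rw [this]; simp [smul_eq_mul]; ring
    have hgap : C / (1 + lam) < ε / 2 := by
      rw [div_lt_iff₀ (by linarith)]
      have : lam = 2 * C / ε + 1 := hlamdef
      rw [this]
      have h2 : 2 * C / ε * ε = 2 * C := by field_simp
      nlinarith [hε]
    have hev : ∀ᶠ a in Bornology.cobounded (EuclideanSpace ℝ (Fin n)),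
        volume {x ∈ closedBall a 1 | V x < lam} < ENNReal.ofReal (ε / 2 - C / (1 + lam)) :=
      (h lam hlam).eventually (Iio_mem_nhds (by
        simp only [ENNReal.ofReal_pos]; linarith))
    filter_upwards [hev] with a ha
    have h1 : (volume {x ∈ closedBall a 1 | V x < lam}).toReal < ε / 2 - C / (1 + lam) :=
      ENNReal.toReal_lt_of_lt_ofReal ha
    rw [Real.dist_eq, sub_zero, abs_of_nonneg (hInonneg a)]
    have := hsplit a
    linarith
  · intro h lam hlam
    have hbound : ∀ a, volume {x ∈ closedBall a 1 | V x < lam} ≤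
        ENNReal.ofReal ((1 + lam) * ∫ x in closedBall a 1, 1 / (1 + V x)) := by
      intro a
      set S := {x ∈ closedBall a 1 | V x < lam} with hSdef
      have hSsub : S ⊆ closedBall a 1 := fun x hx => hx.1
      have hSmeas : MeasurableSet S :=
        measurableSet_closedBall.inter (measurableSet_lt hmeas measurable_const)
      have hSne : volume S ≠ ⊤ :=
        (lt_of_le_of_lt (measure_mono hSsub) measure_closedBall_lt_top).ne
      rw [ENNReal.le_ofReal_iff_toReal_le hSne (mul_nonneg (by linarith) (hInonneg a))]
      have key : (volume S).toReal * (1 / (1 + lam)) ≤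
          ∫ x in closedBall a 1, 1 / (1 + V x) := by
        calc (volume S).toReal * (1 / (1 + lam))
            = ∫ _ in S, (1 / (1 + lam) : ℝ) := by rw [setIntegral_const, measureReal_def, smul_eq_mul]
          _ ≤ ∫ x in S, 1 / (1 + V x) := by
              apply setIntegral_mono_on (integrableOn_const (lt_of_le_of_lt
                (measure_mono hSsub) measure_closedBall_lt_top).ne)
                ((hint a).mono_set hSsub) hSmeas
              intro x hx
              exact one_div_le_one_div_of_le (hpos x) (by linarith [hx.2])
          _ ≤ ∫ x in closedBall a 1, 1 / (1 + V x) :=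
              setIntegral_mono_set (hint a)
                (Filter.Eventually.of_forall fun x => le_of_lt (div_pos one_pos (hpos x)))
                (HasSubset.Subset.eventuallyLE hSsub)
      have hl1 : (0:ℝ) < 1 + lam := by linarith
      have h2 := mul_le_mul_of_nonneg_left key hl1.le
      calc (volume S).toReal
          = (1 + lam) * ((volume S).toReal * (1 / (1 + lam))) := by field_simp
        _ ≤ (1 + lam) * ∫ x in closedBall a 1, 1 / (1 + V x) := h2
    have hlim : Tendsto
        (fun a => ENNReal.ofReal ((1 + lam) * ∫ x in closedBall a 1, 1 / (1 + V x)))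
        (Bornology.cobounded (EuclideanSpace ℝ (Fin n))) (nhds 0) := by
      have : Tendsto (fun a => (1 + lam) * ∫ x in closedBall a 1, 1 / (1 + V x))
          (Bornology.cobounded (EuclideanSpace ℝ (Fin n))) (nhds ((1 + lam) * 0)) :=
        h.const_mul (1 + lam)
      rw [mul_zero] at this
      have := (ENNReal.continuous_ofReal.tendsto 0).comp this
      simpa [Function.comp_def] using this
    exact tendsto_of_tendsto_of_tendsto_of_le_of_le tendsto_const_nhds hlim
      (fun a => bot_le) hbound
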